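/- Let G be a finite 3-regular graph and v a vertex with incident edges e, f, g (distinct, non-loops). Let C be a finite set of cycles of G and extend C* to half-integer coefficients. With u_v := ½(e + f + g), one has C*(u_v − g) = Σ_{c ∈ C : e, f ∈ c} c ∈ ℤ^C. Consequently, C* maps the submodule 𝒞_G of (½ℤ)^{E(G)} spanned by E(G) together with all elements u_v (v ∈ V(G)) into ℤ^C. -/

import Mathlib

/-- A cycle of length `k` in the graph with vertex set `V`, edge set `E` and
source/target maps `s t : E → V`: `k` distinct vertices and `k` distinct edges
with `{s(eᵢ), t(eᵢ)} = {vᵢ, vᵢ₊₁}` (indices mod `k`). -/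
structure GCycle {V E : Type*} (s t : E → V) (k : ℕ) where
  pos : 0 < k
  vtx : ZMod k → V
  edg : ZMod k → E
  vtx_inj : Function.Injective vtx
  edg_inj : Function.Injective edg
  ends : ∀ i, ({s (edg i), t (edg i)} : Set V) = {vtx i, vtx (i + 1)}

/-- A cycle of the graph (of some length). -/
abbrev GraphCycle {V E : Type*} (s t : E → V) : Type _ := (k : ℕ) × GCycle s t k

/-- The edge `e` belongs to the cycle `c`. -/
def GraphCycle.memE {V E : Type*} {s t : E → V} (c : GraphCycle s t) (e : E) : Prop :=
  ∃ i, c.2.edg i = e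

open Classical in
/-- The map `C* : ℤ^{E(G)} → ℤ^C`, sending each edge `e` to the sum of the
cycles in `C` containing `e`, extended `ℤ`-linearly. -/
noncomputable def cycleMap {V E : Type*} [Fintype E] (s t : E → V)
    (C : Set (GraphCycle s t)) (x : E → ℤ) : C → ℤ :=
  fun c => ∑ e : E, if (c : GraphCycle s t).memE e then x e else 0

open Classical in
/-- The extension of the map `C*` to half-integer (here: rational) coefficients. -/
noncomputable def cycleMapQ {V E : Type*} [Fintype E] (s t : E → V)
    (C : Set (GraphCycle s t)) (x : E → ℚ) : C → ℚ :=
  fun c => ∑ e : E, if (c : GraphCycle s t).memE e then x e else 0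

/-- The indicator function of an edge, as an element of `(½ℤ)^{E(G)} ⊆ ℚ^{E(G)}`. -/
noncomputable def edgeInd {E : Type*} (e : E) : E → ℚ :=
  open Classical in fun e' => if e' = e then 1 else 0

open Classical in
/-- For a vertex `w` of a 3-regular graph, `u_w` is half the sum of the (indicators
of the) three edges at `w`, loops counted twice. -/
noncomputable def uVtx {V E : Type*} (s t : E → V) (w : V) : E → ℚ :=
  fun e => (1/2 : ℚ) * ((if s e = w then 1 else 0) + (if t e = w then 1 else 0))

/-- The submodule `𝒞_G ⊆ (½ℤ)^{E(G)}` spanned by the edge indicators together with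
the elements `u_w` for all vertices `w`. -/
noncomputable def CGsub {V E : Type*} (s t : E → V) : Submodule ℤ (E → ℚ) :=
  Submodule.span ℤ (Set.range (edgeInd (E := E)) ∪ Set.range (uVtx s t))

section Aux
set_option linter.unusedSectionVars false

open Classical

variable {V E : Type*} [Fintype E] {s t : E → V}

lemma GraphCycle.neZero (c : GraphCycle s t) : NeZero c.1 := ⟨c.2.pos.ne'⟩

/-- Indicator-sum identity from equality of unordered pairs. -/
lemma indicator_pair {a b x y w : V} (h : ({a, b} : Set V) = {x, y}) :
    ((if a = w then (1:ℚ) else 0) + (if b = w then 1 else 0))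
      = (if x = w then 1 else 0) + (if y = w then 1 else 0) := by
  have hx : x = a ∨ x = b := by
    have : x ∈ ({a, b} : Set V) := h ▸ (by simp)
    simpa using this
  have hy : y = a ∨ y = b := by
    have : y ∈ ({a, b} : Set V) := h ▸ (by simp)
    simpa using this
  have ha : a = x ∨ a = y := by
    have : a ∈ ({x, y} : Set V) := h.symm ▸ (by simp)
    simpa using this
  have hb : b = x ∨ b = y := by
    have : b ∈ ({x, y} : Set V) := h.symm ▸ (by simp)
    simpa using this
  by_cases hab : a = b
  · have hxa : x = a := by
      rcases hx with hx | hx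
      exacts [hx, hx.trans hab.symm]
    have hya : y = a := by
      rcases hy with hy | hy
      exacts [hy, hy.trans hab.symm]
    subst hxa; subst hya; subst hab
    rfl
  · have hxy : x ≠ y := by
      rintro rfl
      rcases ha with ha | ha <;> rcases hb with hb | hb <;>
        exact hab (ha.trans hb.symm)
    rcases hx with hx | hx
    · subst hx
      have hyb : y = b := by
        rcases hy with hy | hy
        · rcases hb with hb | hb
          · exact absurd hb.symm hab
          · exact hb.symm
        · exact hy
      subst hyb
      rfl
    · subst hx
      have hya : y = a := by
        rcases hy with hy | hy
        · exact hy
        · rcases ha with ha | ha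
          · exact absurd ha hab
          · exact ha.symm
      subst hya
      ring

/-- Summing a function over the edges of a cycle. -/
lemma sum_memE (c : GraphCycle s t) [NeZero c.1] (h : E → ℚ) :
    ∑ e' : E, (if c.memE e' then h e' else 0) = ∑ i : ZMod c.1, h (c.2.edg i) := by
  classical
  rw [← Finset.sum_filter]
  have himg : Finset.univ.filter (fun e' => c.memE e') = Finset.image c.2.edg Finset.univ := by
    ext e'
    simp only [Finset.mem_filter, Finset.mem_univ, true_and, Finset.mem_image]
    rfl
  rw [himg, Finset.sum_image (fun i _ j _ hij => c.2.edg_inj hij)]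

/-- The number of incidences of a cycle at a vertex is even. -/
lemma parity (c : GraphCycle s t) [NeZero c.1] (w : V) :
    ∃ m : ℤ, ∑ i : ZMod c.1, ((if s (c.2.edg i) = w then (1:ℚ) else 0)
      + (if t (c.2.edg i) = w then 1 else 0)) = 2 * m := by
  have key : ∀ i, ((if s (c.2.edg i) = w then (1:ℚ) else 0)
      + (if t (c.2.edg i) = w then 1 else 0))
      = (if c.2.vtx i = w then 1 else 0) + (if c.2.vtx (i+1) = w then 1 else 0) :=
    fun i => indicator_pair (c.2.ends i)
  refine ⟨∑ i : ZMod c.1, if c.2.vtx i = w then (1:ℤ) else 0, ?_⟩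
  rw [Finset.sum_congr rfl fun i _ => key i, Finset.sum_add_distrib]
  have h2 : ∑ i : ZMod c.1, (if c.2.vtx (i+1) = w then (1:ℚ) else 0)
      = ∑ i : ZMod c.1, (if c.2.vtx i = w then (1:ℚ) else 0) :=
    Fintype.sum_equiv (Equiv.addRight 1) _ _ (fun i => rfl)
  rw [h2]
  push_cast [apply_ite (Int.cast : ℤ → ℚ)]
  ring

lemma uVtx_int (C : Set (GraphCycle s t)) (w : V) (c : C) :
    ∃ m : ℤ, cycleMapQ s t C (uVtx s t w) c = m := by
  haveI : NeZero (c : GraphCycle s t).1 := (c : GraphCycle s t).neZero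
  obtain ⟨m, hm⟩ := parity (c : GraphCycle s t) w
  refine ⟨m, ?_⟩
  show (∑ e' : E, if (c : GraphCycle s t).memE e' then uVtx s t w e' else 0) = (m : ℚ)
  rw [sum_memE]
  simp only [uVtx]
  rw [← Finset.mul_sum, hm]
  ring

lemma edgeInd_eval (C : Set (GraphCycle s t)) (e' : E) (c : C) :
    cycleMapQ s t C (edgeInd e') c = if (c : GraphCycle s t).memE e' then 1 else 0 := by
  classical
  show (∑ e'' : E, if (c : GraphCycle s t).memE e'' then edgeInd e' e'' else 0) = _
  have key : ∀ e'' : E, (if (c : GraphCycle s t).memE e'' then edgeInd e' e'' else 0)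
      = if e'' = e' then (if (c : GraphCycle s t).memE e' then (1:ℚ) else 0) else 0 := by
    intro e''
    unfold edgeInd
    split_ifs with h1 h2 h2 <;> simp_all
  rw [Finset.sum_congr rfl fun e'' _ => key e'', Finset.sum_ite_eq' Finset.univ e']
  simp

lemma cycleMapQ_add (C : Set (GraphCycle s t)) (x y : E → ℚ) (c : C) :
    cycleMapQ s t C (x + y) c = cycleMapQ s t C x c + cycleMapQ s t C y c := by
  simp only [cycleMapQ]
  rw [← Finset.sum_add_distrib]
  refine Finset.sum_congr rfl fun e' _ => ?_
  split <;> simp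

lemma cycleMapQ_smul (C : Set (GraphCycle s t)) (z : ℤ) (x : E → ℚ) (c : C) :
    cycleMapQ s t C (z • x) c = z • cycleMapQ s t C x c := by
  simp only [cycleMapQ]
  rw [Finset.smul_sum]
  refine Finset.sum_congr rfl fun e' _ => ?_
  split <;> simp

/-- Sum of an edge-indicator over the edges of a cycle. -/
lemma sum_edge_eq (c : GraphCycle s t) [NeZero c.1] (e₀ : E) :
    ∑ i : ZMod c.1, (if c.2.edg i = e₀ then (1:ℚ) else 0)
      = if c.memE e₀ then 1 else 0 := by
  by_cases h : c.memE e₀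
  · obtain ⟨i₀, hi₀⟩ := h
    have key : ∀ i : ZMod c.1, (if c.2.edg i = e₀ then (1:ℚ) else 0)
        = if i = i₀ then 1 else 0 := by
      intro i
      have : c.2.edg i = e₀ ↔ i = i₀ := by
        constructor
        · intro hh; exact c.2.edg_inj (hh.trans hi₀.symm)
        · rintro rfl; exact hi₀
      simp [this]
    rw [Finset.sum_congr rfl fun i _ => key i, Finset.sum_ite_eq' Finset.univ i₀]
    have hm : c.memE e₀ := ⟨i₀, hi₀⟩
    simp [hm]
  · have key : ∀ i : ZMod c.1, (if c.2.edg i = e₀ then (1:ℚ) else 0) = 0 := by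
      intro i
      simp only [ite_eq_right_iff]
      intro hh
      exact absurd ⟨i, hh⟩ h
    rw [Finset.sum_congr rfl fun i _ => key i]
    simp [h]

lemma endgame (P Q R : Prop) [Decidable P] [Decidable Q] [Decidable R] (m : ℤ)
    (hm' : ((if P then (1:ℚ) else 0) + (if Q then 1 else 0) + (if R then 1 else 0)) = 2 * m) :
    (1/2 : ℚ) * ((if P then (1:ℚ) else 0) + (if Q then 1 else 0) + (if R then 1 else 0))
      - (if R then 1 else 0) = if P ∧ Q then 1 else 0 := by
  have hodd1 : ¬ ((1:ℚ) = 2 * m) := by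
    intro h
    have : (1:ℤ) = 2 * m := by exact_mod_cast h
    omega
  have hodd3 : ¬ ((3:ℚ) = 2 * m) := by
    intro h
    have : (3:ℤ) = 2 * m := by exact_mod_cast h
    omega
  by_cases hP : P
  · by_cases hQ : Q
    · by_cases hR : R
      · exfalso
        rw [if_pos hP, if_pos hQ, if_pos hR] at hm'
        exact hodd3 (by linarith)
      · rw [if_pos hP, if_pos hQ, if_neg hR, if_pos ⟨hP, hQ⟩]
        norm_num
    · by_cases hR : R
      · rw [if_pos hP, if_neg hQ, if_pos hR, if_neg (fun h : P ∧ Q => hQ h.2)]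
        norm_num
      · exfalso
        rw [if_pos hP, if_neg hQ, if_neg hR] at hm'
        exact hodd1 (by linarith)
  · by_cases hQ : Q
    · by_cases hR : R
      · rw [if_neg hP, if_pos hQ, if_pos hR, if_neg (fun h : P ∧ Q => hP h.1)]
        norm_num
      · exfalso
        rw [if_neg hP, if_pos hQ, if_neg hR] at hm'
        exact hodd1 (by linarith)
    · by_cases hR : R
      · exfalso
        rw [if_neg hP, if_neg hQ, if_pos hR] at hm'
        exact hodd1 (by linarith)
      · rw [if_neg hP, if_neg hQ, if_neg hR, if_neg (fun h : P ∧ Q => hP h.1)]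
        norm_num

end Aux

open Classical in
/-- Let `G` be a finite 3-regular graph, `v` a vertex with incident edges `e, f, g`
(pairwise distinct non-loops), and `C` a finite set of cycles.  Then
`C*(u_v − g) = Σ_{c ∈ C : e, f ∈ c} c ∈ ℤ^C`, and consequently `C*` maps the
submodule `𝒞_G` of `(½ℤ)^{E(G)}` into `ℤ^C`. -/
theorem cycleMapQ_uVtx_and_span {V E : Type*} [Fintype V] [Fintype E] (s t : E → V)
    (hreg : ∀ w : V,
      Nat.card {e : E // s e = w} + Nat.card {e : E // t e = w} = 3)
    (v : V) (e f g : E)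
    (hef : e ≠ f) (heg : e ≠ g) (hfg : f ≠ g)
    (hle : s e ≠ t e) (hlf : s f ≠ t f) (hlg : s g ≠ t g)
    (hinc : ∀ e' : E, (s e' = v ∨ t e' = v) ↔ (e' = e ∨ e' = f ∨ e' = g))
    (C : Set (GraphCycle s t)) (hC : C.Finite) :
    (cycleMapQ s t C (uVtx s t v - edgeInd g)
        = fun c : C => if (c : GraphCycle s t).memE e ∧ (c : GraphCycle s t).memE f
            then ((1 : ℤ) : ℚ) else ((0 : ℤ) : ℚ)) ∧
    (∀ x ∈ CGsub s t, ∀ c : C, ∃ m : ℤ, cycleMapQ s t C x c = (m : ℚ)) := by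
  classical
  have key : ∀ x : E, ((if s x = v then (1:ℚ) else 0) + (if t x = v then 1 else 0))
      = (if x = e then 1 else 0) + (if x = f then 1 else 0) + (if x = g then 1 else 0) := by
    intro x
    by_cases hx : s x = v ∨ t x = v
    · rcases (hinc x).mp hx with rfl | rfl | rfl
      · rcases hx with hx | hx
        · simp [hx, show t x ≠ v from fun hh => hle (hx.trans hh.symm), hef, heg]
        · simp [hx, show s x ≠ v from fun hh => hle (hh.trans hx.symm), hef, heg]
      · rcases hx with hx | hx
        · simp [hx, show t x ≠ v from fun hh => hlf (hx.trans hh.symm), hef.symm, hfg]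
        · simp [hx, show s x ≠ v from fun hh => hlf (hh.trans hx.symm), hef.symm, hfg]
      · rcases hx with hx | hx
        · simp [hx, show t x ≠ v from fun hh => hlg (hx.trans hh.symm), heg.symm, hfg.symm]
        · simp [hx, show s x ≠ v from fun hh => hlg (hh.trans hx.symm), heg.symm, hfg.symm]
    · push_neg at hx
      have hxe : x ≠ e := fun hh => (not_or.mpr hx) ((hinc x).mpr (Or.inl hh))
      have hxf : x ≠ f := fun hh => (not_or.mpr hx) ((hinc x).mpr (Or.inr (Or.inl hh)))
      have hxg : x ≠ g := fun hh => (not_or.mpr hx) ((hinc x).mpr (Or.inr (Or.inr hh)))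
      simp [hx.1, hx.2, hxe, hxf, hxg]
  have main : ∀ c : C, cycleMapQ s t C (uVtx s t v - edgeInd g) c
      = if (c : GraphCycle s t).memE e ∧ (c : GraphCycle s t).memE f then (1:ℚ) else 0 := by
    intro c
    set c' : GraphCycle s t := (c : GraphCycle s t) with hc'
    haveI : NeZero c'.1 := c'.neZero
    obtain ⟨m, hm⟩ := parity c' v
    have hm' : (if c'.memE e then (1:ℚ) else 0) + (if c'.memE f then 1 else 0)
        + (if c'.memE g then 1 else 0) = 2 * m := by
      rw [← sum_edge_eq c' e, ← sum_edge_eq c' f, ← sum_edge_eq c' g,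
        ← Finset.sum_add_distrib, ← Finset.sum_add_distrib, ← hm]
      exact Finset.sum_congr rfl fun i _ => (key _).symm
    have hval : cycleMapQ s t C (uVtx s t v - edgeInd g) c
        = (1/2 : ℚ) * ((if c'.memE e then (1:ℚ) else 0) + (if c'.memE f then 1 else 0)
            + (if c'.memE g then 1 else 0)) - (if c'.memE g then 1 else 0) := by
      show (∑ e' : E, if c'.memE e' then (uVtx s t v - edgeInd g) e' else 0) = _
      rw [sum_memE]
      have hsummand : ∀ i : ZMod c'.1, (uVtx s t v - edgeInd g) (c'.2.edg i)
          = (1/2 : ℚ) * ((if c'.2.edg i = e then (1:ℚ) else 0)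
              + (if c'.2.edg i = f then 1 else 0) + (if c'.2.edg i = g then 1 else 0))
            - (if c'.2.edg i = g then 1 else 0) := by
        intro i
        simp only [Pi.sub_apply, uVtx, edgeInd]
        rw [key]
      rw [Finset.sum_congr rfl fun i _ => hsummand i, Finset.sum_sub_distrib,
        ← Finset.mul_sum, Finset.sum_add_distrib, Finset.sum_add_distrib,
        sum_edge_eq c' e, sum_edge_eq c' f, sum_edge_eq c' g]
    rw [hval]
    exact endgame _ _ _ m hm'
  constructor
  · funext c
    rw [main c]
    norm_num
  · intro x hx c
    induction hx using Submodule.span_induction with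
    | mem y hy =>
        rcases hy with ⟨e', rfl⟩ | ⟨w, rfl⟩
        · refine ⟨if (c : GraphCycle s t).memE e' then 1 else 0, ?_⟩
          rw [edgeInd_eval]
          split <;> simp
        · exact uVtx_int C w c
    | zero => exact ⟨0, by simp [cycleMapQ]⟩
    | add y z _ _ hy hz =>
        obtain ⟨m, hm⟩ := hy
        obtain ⟨n, hn⟩ := hz
        exact ⟨m + n, by rw [cycleMapQ_add, hm, hn]; push_cast; ring⟩
    | smul z y _ hy =>
        obtain ⟨m, hm⟩ := hy
        exact ⟨z * m, by rw [cycleMapQ_smul, hm, zsmul_eq_mul]; push_cast; ring⟩
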